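/- Let (f_q, f_*) be jointly Gaussian with means μ_q, μ_*, variances σ_q², σ_*² > 0 and covariance σ_{q*}, and let y_* be a Bernoulli random variable with P(y_* = 1 | f_*) = Φ(f_*). Then P(f_q ≤ γ | y_* = 1) = BvN(a_*, b_q; −σ_{q*}/(σ_q√(1+σ_*²))) / Φ(a_*), where a_* = μ_*/√(1+σ_*²) and b_q = (γ−μ_q)/σ_q. -/

import Mathlib

open MeasureTheory Real

/-- Standard normal density. -/
noncomputable def stdPdf (x : ℝ) : ℝ := (Real.sqrt (2 * Real.pi))⁻¹ * Real.exp (-x ^ 2 / 2)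

/-- Standard normal CDF. -/
noncomputable def stdCdf (t : ℝ) : ℝ := ∫ s in Set.Iic t, stdPdf s

/-- Owen's T function. -/
noncomputable def owenT (h a : ℝ) : ℝ :=
  (2 * Real.pi)⁻¹ * ∫ x in (0:ℝ)..a, Real.exp (-h ^ 2 * (1 + x ^ 2) / 2) / (1 + x ^ 2)

/-- Standard bivariate normal density with correlation ρ. -/
noncomputable def bvnPdf (ρ x y : ℝ) : ℝ :=
  Real.exp (-(x ^ 2 - 2 * ρ * x * y + y ^ 2) / (2 * (1 - ρ ^ 2))) /
    (2 * Real.pi * Real.sqrt (1 - ρ ^ 2))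

/-- Standard bivariate normal CDF with correlation ρ. -/
noncomputable def bvn (u v ρ : ℝ) : ℝ :=
  ∫ p : ℝ × ℝ in Set.Iic u ×ˢ Set.Iic v, bvnPdf ρ p.1 p.2

/-- General bivariate Gaussian density with means μ₁ μ₂, std devs σ₁ σ₂, covariance σ₁₂. -/
noncomputable def biGaussPdf (μ₁ μ₂ σ₁ σ₂ σ₁₂ x y : ℝ) : ℝ :=
  Real.exp (-(σ₂ ^ 2 * (x - μ₁) ^ 2 - 2 * σ₁₂ * (x - μ₁) * (y - μ₂) + σ₁ ^ 2 * (y - μ₂) ^ 2) /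
      (2 * (σ₁ ^ 2 * σ₂ ^ 2 - σ₁₂ ^ 2))) /
    (2 * Real.pi * Real.sqrt (σ₁ ^ 2 * σ₂ ^ 2 - σ₁₂ ^ 2))

lemma stdPdf_pos (x : ℝ) : 0 < stdPdf x := by
  unfold stdPdf
  positivity

lemma stdPdf_le (x : ℝ) : stdPdf x ≤ (Real.sqrt (2 * Real.pi))⁻¹ := by
  unfold stdPdf
  have h1 : Real.exp (-x ^ 2 / 2) ≤ 1 := by
    rw [Real.exp_le_one_iff]
    nlinarith [sq_nonneg x]
  have h2 : (0:ℝ) < (Real.sqrt (2 * Real.pi))⁻¹ := by positivity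
  nlinarith

lemma continuous_stdPdf : Continuous stdPdf := by
  unfold stdPdf
  continuity

lemma integrable_stdPdf : Integrable stdPdf := by
  unfold stdPdf
  apply Integrable.const_mul
  have : (fun x : ℝ => Real.exp (-x ^ 2 / 2)) = fun x : ℝ => Real.exp (-(1/2) * x ^ 2) := by
    ext x; ring_nf
  rw [this]
  exact integrable_exp_neg_mul_sq (by norm_num)

lemma integral_stdPdf : ∫ x, stdPdf x = 1 := by
  unfold stdPdf
  rw [integral_const_mul]
  have : (fun x : ℝ => Real.exp (-x ^ 2 / 2)) = fun x : ℝ => Real.exp (-(1/2) * x ^ 2) := by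
    ext x; ring_nf
  rw [this, integral_gaussian]
  rw [show π / (1/2) = 2 * π by ring]
  rw [inv_mul_cancel₀ (by positivity : Real.sqrt (2*π) ≠ 0)]

lemma stdCdf_nonneg (t : ℝ) : 0 ≤ stdCdf t :=
  setIntegral_nonneg measurableSet_Iic fun x _ => (stdPdf_pos x).le

lemma stdCdf_le_one (t : ℝ) : stdCdf t ≤ 1 := by
  rw [← integral_stdPdf]
  exact setIntegral_le_integral integrable_stdPdf (Filter.Eventually.of_forall fun x => (stdPdf_pos x).le)

lemma stdCdf_eq (t : ℝ) : stdCdf t = stdCdf 0 + ∫ u in (0:ℝ)..t, stdPdf u := by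
  have := intervalIntegral.integral_Iic_sub_Iic (f := stdPdf) (μ := volume)
    (a := 0) (b := t) integrable_stdPdf.integrableOn integrable_stdPdf.integrableOn
  unfold stdCdf
  linarith [this]

lemma hasDerivAt_stdCdf (t : ℝ) : HasDerivAt stdCdf (stdPdf t) t := by
  have h : ∀ s, stdCdf s = stdCdf 0 + ∫ u in (0:ℝ)..s, stdPdf u := stdCdf_eq
  have hd : HasDerivAt (fun s => ∫ u in (0:ℝ)..s, stdPdf u) (stdPdf t) t := by
    apply intervalIntegral.integral_hasDerivAt_right
      (integrable_stdPdf.intervalIntegrable)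
      (continuous_stdPdf.stronglyMeasurableAtFilter _ _)
      continuous_stdPdf.continuousAt
  have := (hasDerivAt_const t (stdCdf 0)).add hd
  simp only [zero_add] at this
  exact this.congr_of_eventuallyEq (Filter.Eventually.of_forall fun s => h s)

lemma continuous_stdCdf : Continuous stdCdf :=
  continuous_iff_continuousAt.2 fun t => (hasDerivAt_stdCdf t).continuousAt

lemma tendsto_stdCdf_atBot : Filter.Tendsto stdCdf Filter.atBot (nhds 0) := by
  have h : ∀ t, stdCdf t = ∫ s, Set.indicator (Set.Iic t) stdPdf s := fun t =>
    (integral_indicator measurableSet_Iic).symm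
  apply Filter.Tendsto.congr (fun t => (h t).symm)
  rw [show (0:ℝ) = ∫ _ : ℝ, (0:ℝ) ∂volume from (integral_zero ℝ ℝ).symm]
  apply tendsto_integral_filter_of_dominated_convergence stdPdf
  · exact Filter.Eventually.of_forall fun t =>
      (continuous_stdPdf.aestronglyMeasurable).indicator measurableSet_Iic
  · exact Filter.Eventually.of_forall fun t => Filter.Eventually.of_forall fun s => by
      rw [Real.norm_eq_abs, abs_of_nonneg (Set.indicator_nonneg (fun x _ => (stdPdf_pos x).le) s)]
      exact Set.indicator_le_self' (fun x _ => (stdPdf_pos x).le) s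
  · exact integrable_stdPdf
  · refine Filter.Eventually.of_forall fun s => ?_
    have : ∀ᶠ t in Filter.atBot, Set.indicator (Set.Iic t) stdPdf s = 0 := by
      filter_upwards [Filter.eventually_lt_atBot s] with t ht
      exact Set.indicator_of_notMem (by simpa using ht.not_ge : s ∉ Set.Iic t) _
    exact Filter.Tendsto.congr' (this.mono fun t ht => ht.symm) tendsto_const_nhds

noncomputable def normalPdf (m τ x : ℝ) : ℝ := τ⁻¹ * stdPdf ((x - m) / τ)

lemma normalPdf_nonneg {τ : ℝ} (hτ : 0 < τ) (m x : ℝ) : 0 ≤ normalPdf m τ x := by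
  exact mul_nonneg (inv_nonneg.2 hτ.le) (stdPdf_pos _).le

lemma continuous_normalPdf {τ : ℝ} (hτ : 0 < τ) (m : ℝ) : Continuous (normalPdf m τ) := by
  unfold normalPdf
  exact continuous_const.mul (continuous_stdPdf.comp ((continuous_id.sub continuous_const).div_const τ))

lemma integrable_normalPdf {τ : ℝ} (hτ : 0 < τ) (m : ℝ) : Integrable (normalPdf m τ) := by
  unfold normalPdf
  apply Integrable.const_mul
  have h1 : Integrable (fun x : ℝ => stdPdf (x - m/τ)) := integrable_stdPdf.comp_sub_right _
  have h2 := h1.comp_mul_left' (inv_ne_zero hτ.ne')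
  have : (fun x : ℝ => stdPdf ((x - m) / τ)) = fun x : ℝ => stdPdf (τ⁻¹ * x - m/τ) := by
    ext x; rw [div_eq_inv_mul, mul_sub, ← div_eq_inv_mul m τ]
  rw [this]
  exact h2

/-- Substitution `y = m + τ * t` for full-line integrals. -/
lemma integral_mul_normalPdf (f : ℝ → ℝ) {τ : ℝ} (hτ : 0 < τ) (m : ℝ) :
    ∫ y, f y * normalPdf m τ y = ∫ t, f (m + τ * t) * stdPdf t := by
  have key := MeasureTheory.Measure.integral_comp_mul_left
    (fun x => f (x + m) * normalPdf m τ (x + m)) τ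
  have shift := MeasureTheory.integral_add_right_eq_self (μ := volume)
    (fun y => f y * normalPdf m τ y) m
  rw [shift] at key
  -- key : ∫ x, f (τ*x + m) * normalPdf m τ (τ*x+m) = |τ⁻¹| • ∫ y, f y * normalPdf m τ y
  have h2 : ∀ t : ℝ, f (τ * t + m) * normalPdf m τ (τ * t + m)
      = τ⁻¹ * (f (m + τ * t) * stdPdf t) := by
    intro t
    unfold normalPdf
    have harg : (τ * t + m - m) / τ = t := by field_simp; ring
    rw [harg, show τ * t + m = m + τ * t by ring]
    ring
  simp_rw [h2] at key
  rw [integral_const_mul, abs_of_pos (inv_pos.2 hτ), smul_eq_mul] at key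
  exact (mul_left_cancel₀ (inv_ne_zero hτ.ne') key).symm

/-- Substitution `y = m + τ * t` for `Iic` integrals. -/
lemma setIntegral_mul_normalPdf (f : ℝ → ℝ) {τ : ℝ} (hτ : 0 < τ) (m w : ℝ) :
    ∫ y in Set.Iic w, f y * normalPdf m τ y
      = ∫ t in Set.Iic ((w - m) / τ), f (m + τ * t) * stdPdf t := by
  have hind : ∀ (c : ℝ) (g : ℝ → ℝ), ∫ y in Set.Iic c, g y = ∫ y, Set.indicator (Set.Iic c) g y :=
    fun c g => (integral_indicator measurableSet_Iic).symm
  rw [hind, hind]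
  have key := integral_mul_normalPdf
    (fun y => Set.indicator (Set.Iic w) f y) hτ m
  have h1 : ∀ y, Set.indicator (Set.Iic w) (fun y => f y * normalPdf m τ y) y
      = Set.indicator (Set.Iic w) f y * normalPdf m τ y := by
    intro y
    by_cases hy : y ∈ Set.Iic w <;> simp [Set.indicator_of_mem, Set.indicator_of_notMem, hy]
  have h2 : ∀ t, Set.indicator (Set.Iic ((w - m)/τ)) (fun t => f (m + τ * t) * stdPdf t) t
      = Set.indicator (Set.Iic w) f (m + τ * t) * stdPdf t := by
    intro t
    have hmem : t ∈ Set.Iic ((w - m)/τ) ↔ m + τ * t ∈ Set.Iic w := by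
      simp only [Set.mem_Iic]
      rw [le_div_iff₀ hτ]
      constructor <;> intro <;> nlinarith
    by_cases ht : t ∈ Set.Iic ((w - m)/τ)
    · rw [Set.indicator_of_mem ht, Set.indicator_of_mem (hmem.1 ht)]
    · rw [Set.indicator_of_notMem ht, Set.indicator_of_notMem (fun hc => ht (hmem.2 hc)), zero_mul]
  simp_rw [h1, h2]
  exact key

lemma integral_normalPdf {τ : ℝ} (hτ : 0 < τ) (m : ℝ) : ∫ y, normalPdf m τ y = 1 := by
  have := integral_mul_normalPdf (fun _ => (1:ℝ)) hτ m
  simpa [integral_stdPdf] using this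

lemma stdPdf_mul_stdPdf (a b v : ℝ) :
    stdPdf (a + b * v) * stdPdf v
      = stdPdf (a / Real.sqrt (1 + b ^ 2))
        * stdPdf (Real.sqrt (1 + b ^ 2) * (v + a * b / (1 + b ^ 2))) := by
  have hb : (0:ℝ) < 1 + b ^ 2 := by positivity
  set c := Real.sqrt (1 + b ^ 2) with hcdef
  have hc : 0 < c := Real.sqrt_pos.2 hb
  have hc2 : c ^ 2 = 1 + b ^ 2 := Real.sq_sqrt hb.le
  unfold stdPdf
  rw [show ∀ (p q : ℝ), (Real.sqrt (2*π))⁻¹ * Real.exp p * ((Real.sqrt (2*π))⁻¹ * Real.exp q)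
      = (Real.sqrt (2*π))⁻¹ * (Real.sqrt (2*π))⁻¹ * Real.exp (p + q) from
    fun p q => by rw [Real.exp_add]; ring,
    show ∀ (p q : ℝ), (Real.sqrt (2*π))⁻¹ * Real.exp p * ((Real.sqrt (2*π))⁻¹ * Real.exp q)
      = (Real.sqrt (2*π))⁻¹ * (Real.sqrt (2*π))⁻¹ * Real.exp (p + q) from
    fun p q => by rw [Real.exp_add]; ring]
  congr 2
  rw [div_pow, hc2, mul_pow, hc2]
  field_simp
  ring

lemma integral_stdPdf_shift_scale {c : ℝ} (hc : 0 < c) (d : ℝ) :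
    ∫ v, stdPdf (c * (v + d)) = c⁻¹ := by
  have h1 := MeasureTheory.integral_add_right_eq_self (μ := volume)
    (fun v => stdPdf (c * v)) d
  have h2 := MeasureTheory.Measure.integral_comp_mul_left stdPdf c
  rw [h2, abs_of_pos (inv_pos.2 hc), smul_eq_mul, integral_stdPdf, mul_one] at h1
  simpa using h1

lemma conv_gauss (a b : ℝ) :
    ∫ v, stdPdf (a + b * v) * stdPdf v
      = (Real.sqrt (1 + b ^ 2))⁻¹ * stdPdf (a / Real.sqrt (1 + b ^ 2)) := by
  have hb : (0:ℝ) < 1 + b ^ 2 := by positivity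
  have hc : 0 < Real.sqrt (1 + b ^ 2) := Real.sqrt_pos.2 hb
  simp_rw [stdPdf_mul_stdPdf a b]
  rw [integral_const_mul, integral_stdPdf_shift_scale hc, mul_comm]

lemma lemA (a b : ℝ) :
    ∫ v, stdCdf (a + b * v) * stdPdf v = stdCdf (a / Real.sqrt (1 + b ^ 2)) := by
  have hb : (0:ℝ) < 1 + b ^ 2 := by positivity
  set c := Real.sqrt (1 + b ^ 2) with hcdef
  have hc : 0 < c := Real.sqrt_pos.2 hb
  set F : ℝ → ℝ := fun x => ∫ v, stdCdf (x + b * v) * stdPdf v with hF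
  set G : ℝ → ℝ := fun x => F x - stdCdf (x / c) with hG
  have hmeas : ∀ x : ℝ, AEStronglyMeasurable (fun v => stdCdf (x + b * v) * stdPdf v) volume := by
    intro x
    exact ((continuous_stdCdf.comp (continuous_const.add (continuous_const.mul continuous_id))).mul
      continuous_stdPdf).aestronglyMeasurable
  have hFint : ∀ x : ℝ, Integrable (fun v => stdCdf (x + b * v) * stdPdf v) := by
    intro x
    apply integrable_stdPdf.bdd_mul (c := 1)
      ((continuous_stdCdf.comp (continuous_const.add (continuous_const.mul continuous_id))).aestronglyMeasurable)
    exact Filter.Eventually.of_forall fun v => by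
      simp only [Function.comp_apply, Real.norm_eq_abs, abs_of_nonneg (stdCdf_nonneg _)]
      exact stdCdf_le_one _
  have hFderiv : ∀ x : ℝ, HasDerivAt F (c⁻¹ * stdPdf (x / c)) x := by
    intro x₀
    have key := hasDerivAt_integral_of_dominated_loc_of_deriv_le
      (F := fun x v => stdCdf (x + b * v) * stdPdf v)
      (F' := fun x v => stdPdf (x + b * v) * stdPdf v)
      (bound := fun v => (Real.sqrt (2 * π))⁻¹ * stdPdf v)
      (x₀ := x₀) (s := Metric.ball x₀ 1) (Metric.ball_mem_nhds x₀ one_pos)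
      (Filter.Eventually.of_forall fun x => hmeas x)
      (hFint x₀)
      ((continuous_stdPdf.comp (continuous_const.add (continuous_const.mul continuous_id))).mul
        continuous_stdPdf).aestronglyMeasurable
      (Filter.Eventually.of_forall fun v => fun x _ => by
        rw [Real.norm_eq_abs, abs_of_nonneg (mul_nonneg (stdPdf_pos _).le (stdPdf_pos _).le)]
        exact mul_le_mul_of_nonneg_right (stdPdf_le _) (stdPdf_pos _).le)
      (integrable_stdPdf.const_mul _)
      (Filter.Eventually.of_forall fun v => fun x _ => by
        have h1 : HasDerivAt (fun x : ℝ => x + b * v) 1 x := by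
          simpa using (hasDerivAt_id x).add_const (b * v)
        have h2 := (hasDerivAt_stdCdf (x + b * v)).comp x h1
        simpa using h2.mul_const (stdPdf v))
    rw [conv_gauss x₀ b] at key
    exact key.2
  have hcdf_deriv : ∀ x : ℝ, HasDerivAt (fun x => stdCdf (x / c)) (stdPdf (x / c) * c⁻¹) x := by
    intro x
    have h1 : HasDerivAt (fun y : ℝ => y / c) c⁻¹ x := by
      simpa [div_eq_mul_inv] using (hasDerivAt_id x).mul_const c⁻¹
    exact (hasDerivAt_stdCdf (x / c)).comp x h1
  have hGderiv : ∀ x : ℝ, HasDerivAt G 0 x := by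
    intro x
    have := (hFderiv x).sub (hcdf_deriv x)
    rw [hG]
    have h0 : c⁻¹ * stdPdf (x / c) - stdPdf (x / c) * c⁻¹ = 0 := by ring
    rw [h0] at this
    exact this
  have hGconst : ∀ x y : ℝ, G x = G y := fun x y =>
    is_const_of_deriv_eq_zero (fun z => (hGderiv z).differentiableAt)
      (fun z => (hGderiv z).deriv) x y
  -- limit of G at -infinity is 0
  have hFlim : Filter.Tendsto F Filter.atBot (nhds 0) := by
    rw [hF]
    rw [show (0:ℝ) = ∫ _ : ℝ, (0:ℝ) ∂volume from (integral_zero ℝ ℝ).symm]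
    apply tendsto_integral_filter_of_dominated_convergence stdPdf
    · exact Filter.Eventually.of_forall fun x => hmeas x
    · exact Filter.Eventually.of_forall fun x => Filter.Eventually.of_forall fun v => by
        rw [Real.norm_eq_abs, abs_of_nonneg (mul_nonneg (stdCdf_nonneg _) (stdPdf_pos _).le)]
        calc stdCdf (x + b * v) * stdPdf v ≤ 1 * stdPdf v :=
              mul_le_mul_of_nonneg_right (stdCdf_le_one _) (stdPdf_pos _).le
          _ = stdPdf v := one_mul _
    · exact integrable_stdPdf
    · refine Filter.Eventually.of_forall fun v => ?_
      have h1 : Filter.Tendsto (fun x : ℝ => x + b * v) Filter.atBot Filter.atBot :=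
        Filter.tendsto_atBot_add_const_right _ _ Filter.tendsto_id
      have h2 := tendsto_stdCdf_atBot.comp h1
      simpa using h2.mul_const (stdPdf v)
  have hClim : Filter.Tendsto (fun x : ℝ => stdCdf (x / c)) Filter.atBot (nhds 0) := by
    have h1 : Filter.Tendsto (fun x : ℝ => x / c) Filter.atBot Filter.atBot :=
      Filter.tendsto_id.atBot_div_const hc
    exact tendsto_stdCdf_atBot.comp h1
  have hGlim : Filter.Tendsto G Filter.atBot (nhds 0) := by
    have := hFlim.sub hClim
    simpa using this
  have hGlim' : Filter.Tendsto G Filter.atBot (nhds (G a)) := by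
    have : G = fun _ => G a := funext fun x => hGconst x a
    rw [this]
    exact tendsto_const_nhds
  have h0 : G a = 0 := tendsto_nhds_unique hGlim' hGlim
  have : F a - stdCdf (a / c) = 0 := h0
  linarith [this]


lemma biGauss_factor (μ1 μ2 σ1 σ2 σ12 : ℝ) (h1 : 0 < σ1)
    (hD : 0 < σ1 ^ 2 * σ2 ^ 2 - σ12 ^ 2) (x y : ℝ) :
    biGaussPdf μ1 μ2 σ1 σ2 σ12 x y
      = normalPdf μ1 σ1 x
        * normalPdf (μ2 + σ12 / σ1 ^ 2 * (x - μ1)) (Real.sqrt (σ1 ^ 2 * σ2 ^ 2 - σ12 ^ 2) / σ1) y := by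
  set D := σ1 ^ 2 * σ2 ^ 2 - σ12 ^ 2 with hDdef
  set d := Real.sqrt D with hddef
  have hd : 0 < d := Real.sqrt_pos.2 hD
  have hd2 : d ^ 2 = D := Real.sq_sqrt hD.le
  have h2π : Real.sqrt (2 * π) * Real.sqrt (2 * π) = 2 * π :=
    Real.mul_self_sqrt (by positivity)
  unfold biGaussPdf normalPdf stdPdf
  have hexp : Real.exp (-(σ2 ^ 2 * (x - μ1) ^ 2 - 2 * σ12 * (x - μ1) * (y - μ2)
        + σ1 ^ 2 * (y - μ2) ^ 2) / (2 * D))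
      = Real.exp (-((x - μ1) / σ1) ^ 2 / 2)
        * Real.exp (-((y - (μ2 + σ12 / σ1 ^ 2 * (x - μ1))) / (d / σ1)) ^ 2 / 2) := by
    rw [← Real.exp_add]
    congr 1
    rw [div_pow _ (d / σ1), div_pow d σ1, hd2]
    field_simp
    ring
  rw [hexp, ← hDdef, ← hddef, ← h2π]
  field_simp
  ring
  rw [Real.sqrt_sq (by positivity)]

lemma inner_integral (mx : ℝ) {τ : ℝ} (hτ : 0 < τ) :
    ∫ y, stdCdf y * normalPdf mx τ y = stdCdf (mx / Real.sqrt (1 + τ ^ 2)) := by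
  rw [integral_mul_normalPdf stdCdf hτ mx]
  exact lemA mx τ

lemma integrable_stdCdf_mul_normalPdf {τ : ℝ} (hτ : 0 < τ) (mx : ℝ) :
    Integrable (fun y => stdCdf y * normalPdf mx τ y) := by
  apply (integrable_normalPdf hτ mx).bdd_mul (c := 1) continuous_stdCdf.aestronglyMeasurable
  exact Filter.Eventually.of_forall fun v => by
    rw [Real.norm_eq_abs, abs_of_nonneg (stdCdf_nonneg _)]; exact stdCdf_le_one _

lemma joint_integrable (w : ℝ → ℝ) (hw : Continuous w) (hw0 : ∀ y, 0 ≤ w y)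
    (hw1 : ∀ y, w y ≤ 1) (α β μ : ℝ) {σ τ : ℝ} (hσ : 0 < σ) (hτ : 0 < τ) :
    Integrable (fun p : ℝ × ℝ =>
      w p.2 * (normalPdf μ σ p.1 * normalPdf (α + β * p.1) τ p.2))
      (volume.prod volume) := by
  have hcont : Continuous (fun p : ℝ × ℝ =>
      w p.2 * (normalPdf μ σ p.1 * normalPdf (α + β * p.1) τ p.2)) := by
    apply (hw.comp continuous_snd).mul
    apply ((continuous_normalPdf hσ μ).comp continuous_fst).mul
    unfold normalPdf
    apply continuous_const.mul
    apply continuous_stdPdf.comp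
    exact (continuous_snd.sub (continuous_const.add (continuous_const.mul continuous_fst))).div_const τ
  have hmeas := hcont.aestronglyMeasurable (μ := volume.prod volume)
  rw [integrable_prod_iff hmeas]
  have hint_w : ∀ m : ℝ, Integrable (fun y => w y * normalPdf m τ y) := by
    intro m
    apply (integrable_normalPdf hτ m).bdd_mul (c := 1) hw.aestronglyMeasurable
    exact Filter.Eventually.of_forall fun v => by rw [Real.norm_eq_abs, abs_of_nonneg (hw0 _)]; exact hw1 _
  constructor
  · refine Filter.Eventually.of_forall fun x => ?_
    simp only
    have : (fun y => w y * (normalPdf μ σ x * normalPdf (α + β * x) τ y))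
        = fun y => normalPdf μ σ x * (w y * normalPdf (α + β * x) τ y) := by
      ext y; ring
    rw [this]
    exact (hint_w (α + β * x)).const_mul _
  · have hnn : ∀ x y : ℝ, 0 ≤ w y * (normalPdf μ σ x * normalPdf (α + β * x) τ y) := by
      intro x y
      exact mul_nonneg (hw0 _) (mul_nonneg (normalPdf_nonneg hσ _ _) (normalPdf_nonneg hτ _ _))
    apply Integrable.mono' (integrable_normalPdf hσ μ) hmeas.norm.integral_prod_right'
    refine Filter.Eventually.of_forall fun x => ?_
    simp only
    rw [Real.norm_eq_abs, abs_of_nonneg (integral_nonneg (fun y => norm_nonneg _))]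
    have heq : ∀ y : ℝ, ‖w y * (normalPdf μ σ x * normalPdf (α + β * x) τ y)‖
        = normalPdf μ σ x * (w y * normalPdf (α + β * x) τ y) := by
      intro y
      rw [Real.norm_eq_abs, abs_of_nonneg (hnn x y)]; ring
    simp_rw [heq]
    rw [integral_const_mul]
    have hle : (∫ y, w y * normalPdf (α + β * x) τ y) ≤ 1 := by
      rw [← integral_normalPdf hτ (α + β * x)]
      apply integral_mono (hint_w _) (integrable_normalPdf hτ _)
      intro y
      calc w y * normalPdf (α + β * x) τ y ≤ 1 * normalPdf (α + β * x) τ y :=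
            mul_le_mul_of_nonneg_right (hw1 _) (normalPdf_nonneg hτ _ _)
        _ = normalPdf (α + β * x) τ y := one_mul _
    calc normalPdf μ σ x * ∫ y, w y * normalPdf (α + β * x) τ y
        ≤ normalPdf μ σ x * 1 :=
          mul_le_mul_of_nonneg_left hle (normalPdf_nonneg hσ _ _)
      _ = normalPdf μ σ x := mul_one _



lemma bvnPdf_eq_biGauss (ρ x y : ℝ) : bvnPdf ρ x y = biGaussPdf 0 0 1 1 ρ x y := by
  unfold bvnPdf biGaussPdf
  norm_num

lemma bvnPdf_symm (ρ x y : ℝ) : bvnPdf ρ x y = bvnPdf ρ y x := by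
  unfold bvnPdf
  ring_nf

theorem stmt_7 (μq μs σq σs σqs γ : ℝ) (hq : 0 < σq) (hs : 0 < σs)
    (hcov : σqs ^ 2 < σq ^ 2 * σs ^ 2) :
    (∫ p : ℝ × ℝ in Set.Iic γ ×ˢ Set.univ, stdCdf p.2 * biGaussPdf μq μs σq σs σqs p.1 p.2) /
        (∫ p : ℝ × ℝ, stdCdf p.2 * biGaussPdf μq μs σq σs σqs p.1 p.2) =
      bvn (μs / Real.sqrt (1 + σs ^ 2)) ((γ - μq) / σq)
          (-σqs / (σq * Real.sqrt (1 + σs ^ 2))) /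
        stdCdf (μs / Real.sqrt (1 + σs ^ 2)) := by
  have hD : 0 < σq ^ 2 * σs ^ 2 - σqs ^ 2 := by linarith
  set D : ℝ := σq ^ 2 * σs ^ 2 - σqs ^ 2 with hDdef
  set τ : ℝ := Real.sqrt D / σq with hτdef
  have hτ : 0 < τ := div_pos (Real.sqrt_pos.2 hD) hq
  have hτ2 : τ ^ 2 = D / σq ^ 2 := by
    rw [hτdef, div_pow, Real.sq_sqrt hD.le]
  set c₀ : ℝ := Real.sqrt (1 + σs ^ 2) with hc₀def
  have hc₀ : 0 < c₀ := Real.sqrt_pos.2 (by positivity)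
  have hc₀2 : c₀ ^ 2 = 1 + σs ^ 2 := Real.sq_sqrt (by positivity)
  set E : ℝ := Real.sqrt (σq ^ 2 + D) with hEdef
  have hE : 0 < E := Real.sqrt_pos.2 (by positivity)
  have hE2 : E ^ 2 = σq ^ 2 + D := Real.sq_sqrt (by positivity)
  set r : ℝ := -σqs / (σq * c₀) with hrdef
  have hr2 : r ^ 2 = σqs ^ 2 / (σq ^ 2 * (1 + σs ^ 2)) := by
    rw [hrdef, div_pow, neg_pow, mul_pow, hc₀2]
    ring
  have hr1 : r ^ 2 < 1 := by
    rw [hr2, div_lt_one (by positivity)]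
    nlinarith
  have hs1 : (0:ℝ) < 1 - r ^ 2 := by linarith
  -- key sqrt computations
  have hcp : Real.sqrt (1 + τ ^ 2) = E / σq := by
    rw [show 1 + τ ^ 2 = (σq ^ 2 + D) / σq ^ 2 by rw [hτ2]; field_simp,
      Real.sqrt_div (by positivity) _, Real.sqrt_sq hq.le]
  have hsp : Real.sqrt (1 - r ^ 2) = E / (σq * c₀) := by
    rw [show 1 - r ^ 2 = (σq ^ 2 + D) / (σq ^ 2 * (1 + σs ^ 2)) by
        rw [hr2]; field_simp; ring,
      Real.sqrt_div (by positivity) _]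
    congr 1
    rw [show σq ^ 2 * (1 + σs ^ 2) = (σq * c₀) ^ 2 by rw [mul_pow, hc₀2],
      Real.sqrt_sq (by positivity)]
  -- factored joint density
  set α : ℝ := μs - σqs / σq ^ 2 * μq with hαdef
  set β : ℝ := σqs / σq ^ 2 with hβdef
  have hfac : ∀ x y : ℝ, biGaussPdf μq μs σq σs σqs x y
      = normalPdf μq σq x * normalPdf (α + β * x) τ y := by
    intro x y
    rw [biGauss_factor μq μs σq σs σqs hq hD x y]
    rw [show μs + σqs / σq ^ 2 * (x - μq) = α + β * x by rw [hαdef, hβdef]; ring]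
  have hfull : Integrable (fun p : ℝ × ℝ =>
      stdCdf p.2 * (normalPdf μq σq p.1 * normalPdf (α + β * p.1) τ p.2))
      (volume.prod volume) :=
    joint_integrable stdCdf continuous_stdCdf stdCdf_nonneg stdCdf_le_one α β μq hq hτ
  -- the argument identity
  have harg : ∀ t : ℝ, (α + β * (μq + σq * t)) / Real.sqrt (1 + τ ^ 2)
      = (σq * μs + σqs * t) / E := by
    intro t
    rw [hcp, hαdef, hβdef]
    field_simp
    ring
  -- inner reduction for a fixed x
  have hinner : ∀ x : ℝ, (∫ y, stdCdf y * (normalPdf μq σq x * normalPdf (α + β * x) τ y))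
      = stdCdf ((α + β * x) / Real.sqrt (1 + τ ^ 2)) * normalPdf μq σq x := by
    intro x
    have h1 : (fun y => stdCdf y * (normalPdf μq σq x * normalPdf (α + β * x) τ y))
        = fun y => normalPdf μq σq x * (stdCdf y * normalPdf (α + β * x) τ y) := by
      ext y; ring
    rw [h1, integral_const_mul, inner_integral _ hτ, mul_comm]
  -- NUMERATOR
  have hnum : (∫ p : ℝ × ℝ in Set.Iic γ ×ˢ Set.univ,
      stdCdf p.2 * biGaussPdf μq μs σq σs σqs p.1 p.2)
      = ∫ t in Set.Iic ((γ - μq) / σq), stdCdf ((σq * μs + σqs * t) / E) * stdPdf t := by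
    rw [MeasureTheory.Measure.volume_eq_prod]
    simp_rw [hfac]
    rw [setIntegral_prod _ hfull.integrableOn]
    simp only [Measure.restrict_univ]
    have h2 : ∀ x : ℝ, (∫ y, stdCdf y * (normalPdf μq σq x * normalPdf (α + β * x) τ y))
        = (fun x => stdCdf ((α + β * x) / Real.sqrt (1 + τ ^ 2))) x * normalPdf μq σq x :=
      hinner
    rw [setIntegral_congr_fun measurableSet_Iic (fun x _ => h2 x)]
    rw [setIntegral_mul_normalPdf _ hq μq γ]
    apply setIntegral_congr_fun measurableSet_Iic
    intro t _
    show stdCdf ((α + β * (μq + σq * t)) / Real.sqrt (1 + τ ^ 2)) * stdPdf t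
      = stdCdf ((σq * μs + σqs * t) / E) * stdPdf t
    rw [harg t]
  -- DENOMINATOR
  have hden : (∫ p : ℝ × ℝ, stdCdf p.2 * biGaussPdf μq μs σq σs σqs p.1 p.2)
      = stdCdf (μs / c₀) := by
    rw [MeasureTheory.Measure.volume_eq_prod]
    simp_rw [hfac]
    rw [integral_prod _ hfull]
    simp_rw [hinner]
    rw [integral_mul_normalPdf _ hq μq]
    have h3 : ∀ t : ℝ, stdCdf ((α + β * (μq + σq * t)) / Real.sqrt (1 + τ ^ 2)) * stdPdf t
        = stdCdf (σq * μs / E + σqs / E * t) * stdPdf t := by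
      intro t
      rw [harg t]
      congr 2
      field_simp
    simp_rw [h3]
    rw [lemA (σq * μs / E) (σqs / E)]
    congr 1
    have h4 : Real.sqrt (1 + (σqs / E) ^ 2) = σq * c₀ / E := by
      rw [show 1 + (σqs / E) ^ 2 = (σq * c₀) ^ 2 / E ^ 2 by
          rw [div_pow, mul_pow, hc₀2, hE2]; field_simp; ring,
        Real.sqrt_div (by positivity) _, Real.sqrt_sq (by positivity),
        Real.sqrt_sq (by positivity)]
    rw [h4]
    field_simp
  -- BVN side
  have hr_fac : ∀ x y : ℝ, bvnPdf r x y
      = normalPdf 0 1 x * normalPdf (0 + r * x) (Real.sqrt (1 - r ^ 2)) y := by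
    intro x y
    rw [bvnPdf_eq_biGauss, biGauss_factor 0 0 1 1 r one_pos (by nlinarith) x y]
    norm_num
  have hrfull : Integrable (fun p : ℝ × ℝ => bvnPdf r p.1 p.2) (volume.prod volume) := by
    have := joint_integrable (fun _ => (1:ℝ)) continuous_const (fun _ => zero_le_one)
      (fun _ => le_refl 1) 0 r 0 (by norm_num : (0:ℝ) < 1) (Real.sqrt_pos.2 hs1)
    simp only [one_mul] at this
    apply this.congr
    refine Filter.Eventually.of_forall fun p => ?_
    exact (hr_fac p.1 p.2).symm
  have hbvn : bvn (μs / c₀) ((γ - μq) / σq) r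
      = ∫ t in Set.Iic ((γ - μq) / σq), stdCdf ((σq * μs + σqs * t) / E) * stdPdf t := by
    unfold bvn
    rw [MeasureTheory.Measure.volume_eq_prod, ← Measure.prod_restrict]
    rw [integral_prod_symm _ (by rw [Measure.prod_restrict]; exact hrfull.integrableOn)]
    have hstd : normalPdf 0 1 = stdPdf := by
      funext z; unfold normalPdf; simp
    have h5 : ∀ t : ℝ, (∫ x in Set.Iic (μs / c₀), bvnPdf r x t)
        = stdCdf ((σq * μs + σqs * t) / E) * stdPdf t := by
      intro t
      have h6 : ∀ x : ℝ, bvnPdf r x t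
          = (fun _ : ℝ => stdPdf t) x * normalPdf (0 + r * t) (Real.sqrt (1 - r ^ 2)) x := by
        intro x
        rw [bvnPdf_symm, hr_fac t x, hstd]
      rw [setIntegral_congr_fun measurableSet_Iic (fun x _ => h6 x)]
      rw [setIntegral_mul_normalPdf _ (Real.sqrt_pos.2 hs1) _ _]
      rw [integral_const_mul]
      have h7 : (μs / c₀ - (0 + r * t)) / Real.sqrt (1 - r ^ 2)
          = (σq * μs + σqs * t) / E := by
        rw [hsp, hrdef]
        field_simp
        ring
      rw [h7]
      unfold stdCdf
      ring
    rw [setIntegral_congr_fun measurableSet_Iic (fun t _ => h5 t)]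
  rw [hnum, hden, hbvn]
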